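/- The kernel of the linear map M_F is exactly the 4-dimensional subspace consisting of all vectors c^F_0(λ1,λ2,λ3,λ4) = (−λ2+λ3, λ1+λ3−λ4, −λ1−2λ3, λ1−λ2+2λ3, −λ1−λ2, −λ1−λ3−λ4, −λ4, −λ3, λ1, λ2−λ3, λ3+λ4, λ4, λ2−λ3+λ4, λ2, λ3) ∈ ℝ^15 with λ1, λ2, λ3, λ4 ∈ ℝ, and the map (λ1,λ2,λ3,λ4) ↦ c^F_0(λ1,λ2,λ3,λ4) is injective. -/

import Mathlib

set_option maxHeartbeats 2000000

noncomputable section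

/-- The coefficient matrix `M_F` of the type-F divergence system:
rows are `d47,…,d61`, columns are `c54,…,c68`. -/
def MF : Matrix (Fin 15) (Fin 15) ℝ :=
  !![0, 0, 0, 1, 1, 0, 0, 0, 0, 2, 0, 0, 0, 0, 0;
    0, 0, 1, 1, 0, 0, 0, 0, 0, 0, 0, 0, 0, 1, 0;
    0, 0, 0, 1, 0, 1, 0, 0, 0, 0, 0, 0, 1, 0, 0;
    0, 0, 0, 0, 1, 0, 0, 0, 1, 0, 0, 0, 0, 1, 0;
    0, 1, 0, 0, 1, 0, 0, 0, 0, 0, 0, 0, 1, 0, 0;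
    0, 0, 0, 0, 0, 1, 0, 0, 1, 0, 1, 0, 0, 0, 0;
    0, 1, 0, 0, 0, 1, 0, 0, 0, 0, 0, 2, 0, 0, 0;
    1, 0, 0, 0, 0, 0, 1, 0, 0, 0, 0, 0, 1, 0, 0;
    0, 0, 0, 0, 0, 0, 1, 1, 0, 0, 1, 0, 0, 0, 0;
    0, 0, 0, 0, 0, 0, 1, 0, 0, 0, 0, 1, 0, 0, 0;
    1, 0, 0, 0, 0, 0, 0, 1, 0, 0, 0, 0, 0, 1, 0;
    0, 0, 0, 0, 0, 0, 0, 1, 0, 0, 0, 0, 0, 0, 1;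
    0, 0, 1, 0, 0, 0, 0, 0, 1, 0, 0, 0, 0, 0, 2;
    1, 0, 0, 0, 0, 0, 0, 0, 0, 1, 0, 0, 0, 0, 0;
    0, 1, 1, 0, 0, 0, 0, 0, 0, 0, 1, 0, 0, 0, 0]

/-- The kernel parametrization `c^F_0(λ1,λ2,λ3,λ4) ∈ ℝ^15`. -/
def cF0 (l1 l2 l3 l4 : ℝ) : Fin 15 → ℝ :=
  ![-l2 + l3,
    l1 + l3 - l4,
    -l1 - 2 * l3,
    l1 - l2 + 2 * l3,
    -l1 - l2,
    -l1 - l3 - l4,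
    -l4,
    -l3,
    l1,
    l2 - l3,
    l3 + l4,
    l4,
    l2 - l3 + l4,
    l2,
    l3]

/-- The kernel of `M_F` is exactly the set of vectors `c^F_0(λ1,λ2,λ3,λ4)`,
and the parametrization is injective. -/
theorem MF_kernel :
    (∀ c : Fin 15 → ℝ, MF.mulVec c = 0 ↔ ∃ l1 l2 l3 l4 : ℝ, c = cF0 l1 l2 l3 l4) ∧
    Function.Injective (fun l : ℝ × ℝ × ℝ × ℝ => cF0 l.1 l.2.1 l.2.2.1 l.2.2.2) := by
  constructor
  · intro c
    have hc : c = ![c 0, c 1, c 2, c 3, c 4, c 5, c 6, c 7, c 8, c 9, c 10, c 11, c 12, c 13,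
        c 14] := by
      funext i; fin_cases i <;> rfl
    constructor
    · intro h
      rw [hc] at h
      simp only [MF, Matrix.cons_mulVec, Matrix.cons_dotProduct, Matrix.head_cons,
        Matrix.tail_cons, Matrix.dotProduct_of_isEmpty, Matrix.cons_eq_zero_iff,
        Matrix.empty_mulVec, zero_mul, one_mul, add_zero, zero_add] at h
      obtain ⟨h0, h1, h2, h3, h4, h5, h6, h7, h8, h9, h10, h11, h12, h13, h14, -⟩ := h
      refine ⟨c 8, c 13, c 14, c 11, ?_⟩
      conv_lhs => rw [hc]
      simp only [cF0, Matrix.vecCons, Fin.cons_inj]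
      and_intros
      all_goals first | trivial | linarith
    · rintro ⟨l1, l2, l3, l4, rfl⟩
      simp only [MF, cF0, Matrix.cons_mulVec, Matrix.cons_dotProduct, Matrix.head_cons,
        Matrix.tail_cons, Matrix.dotProduct_of_isEmpty, Matrix.cons_eq_zero_iff,
        Matrix.empty_mulVec, zero_mul, one_mul, add_zero, zero_add]
      and_intros <;> first | ring1 | (funext i; exact i.elim0)
  · rintro ⟨a1, a2, a3, a4⟩ ⟨b1, b2, b3, b4⟩ h
    simp only at h
    have e1 : a1 = b1 := congrFun h 8
    have e2 : a2 = b2 := congrFun h 13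
    have e3 : a3 = b3 := congrFun h 14
    have e4 : a4 = b4 := congrFun h 11
    simp_all
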